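/- Let S ⊆ ℝ be compact with 0 ∉ S and at least n+1 points. If P is a polynomial of degree at most n with P(0) = 1 and there exist n+1 points x₀ < x₁ < ... < xₙ in S with |P(x_j)| = ‖P‖_S for all j, and P(x_j) = (−1)^{δ_j+1} P(x_{j+1}) where δ_j = 1 if x_j < 0 < x_{j+1} and δ_j = 0 otherwise, then P minimizes ‖·‖_S among polynomials Q of degree at most n with Q(0) = 1. -/

import Mathlib

open Polynomial

noncomputable def supNorm (S : Set ℝ) (P : ℝ[X]) : ℝ := sSup ((fun x => |P.eval x|) '' S)

lemma exists_root_of_mul_neg (p : ℝ[X]) {a b : ℝ} (hab : a < b)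
    (h : p.eval a * p.eval b < 0) : ∃ c ∈ Set.Ioo a b, p.eval c = 0 := by
  have hcont : ContinuousOn (fun t => p.eval t) (Set.Icc a b) :=
    (Polynomial.continuous p).continuousOn
  rcases mul_neg_iff.mp h with ⟨ha, hb⟩ | ⟨ha, hb⟩
  · have h0 : (0 : ℝ) ∈ Set.Ioo (p.eval b) (p.eval a) := ⟨hb, ha⟩
    obtain ⟨c, hc, hc0⟩ := intermediate_value_Ioo' hab.le hcont h0
    exact ⟨c, hc, hc0⟩
  · have h0 : (0 : ℝ) ∈ Set.Ioo (p.eval a) (p.eval b) := ⟨ha, hb⟩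
    obtain ⟨c, hc, hc0⟩ := intermediate_value_Ioo hab.le hcont h0
    exact ⟨c, hc, hc0⟩

theorem alternation_sufficient (n : ℕ) (S : Set ℝ) (hS : IsCompact S)
    (h0 : (0 : ℝ) ∉ S) (hcard : (n + 1 : ℕ∞) ≤ S.encard)
    (P : ℝ[X]) (hdeg : P.degree ≤ n) (hP0 : P.eval 0 = 1)
    (x : Fin (n + 1) → ℝ) (hmono : StrictMono x) (hxS : ∀ j, x j ∈ S)
    (hext : ∀ j, |P.eval (x j)| = supNorm S P)
    (halt : ∀ j : Fin n,
      P.eval (x j.castSucc) =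
        (if x j.castSucc < 0 ∧ 0 < x j.succ then P.eval (x j.succ) else -P.eval (x j.succ))) :
    ∀ Q : ℝ[X], Q.degree ≤ n → Q.eval 0 = 1 → supNorm S P ≤ supNorm S Q := by
  intro Q hQdeg hQ0
  by_contra hlt
  push_neg at hlt
  -- every value of Q on S is bounded by supNorm S Q
  have hQbdd : ∀ y ∈ S, |Q.eval y| ≤ supNorm S Q := by
    intro y hy
    refine le_csSup ?_ ⟨y, hy, rfl⟩
    exact (hS.image ((Polynomial.continuous Q).abs)).bddAbove
  have hkey : ∀ j, |Q.eval (x j)| < |P.eval (x j)| := fun j =>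
    lt_of_le_of_lt (hQbdd _ (hxS j)) (by rw [hext j]; exact hlt)
  have hx0 : ∀ j, x j ≠ 0 := fun j h => h0 (h ▸ hxS j)
  set R : ℝ[X] := P - Q with hRdef
  have hR0 : R.eval 0 = 0 := by simp [hRdef, hP0, hQ0]
  obtain ⟨R₁, hR₁⟩ : (X : ℝ[X]) ∣ R := by
    have := (Polynomial.dvd_iff_isRoot (p := R) (a := 0)).mpr hR0
    simpa using this
  have hReval : ∀ t : ℝ, R.eval t = t * R₁.eval t := by
    intro t; rw [hR₁]; simp
  -- P and R have the same sign at each x j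
  have hPR : ∀ j, 0 < P.eval (x j) * R.eval (x j) := by
    intro j
    have h1 := hkey j
    have h2 : R.eval (x j) = P.eval (x j) - Q.eval (x j) := by simp [hRdef]
    rw [h2]
    nlinarith [le_abs_self (P.eval (x j) * Q.eval (x j)),
      abs_mul (P.eval (x j)) (Q.eval (x j)),
      abs_mul_abs_self (P.eval (x j)), abs_nonneg (Q.eval (x j)),
      abs_nonneg (P.eval (x j))]
  -- strict sign alternation of R₁ at consecutive points
  have hsign : ∀ j : Fin n, R₁.eval (x j.castSucc) * R₁.eval (x j.succ) < 0 := by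
    intro j
    have hPc := hPR j.castSucc
    have hPs := hPR j.succ
    have hxc := hx0 j.castSucc
    have hxs := hx0 j.succ
    have hxlt : x j.castSucc < x j.succ := hmono (Fin.castSucc_lt_succ : j.castSucc < j.succ)
    have hRc := hReval (x j.castSucc)
    have hRs := hReval (x j.succ)
    by_cases hcase : x j.castSucc < 0 ∧ 0 < x j.succ
    · have hPeq : P.eval (x j.castSucc) = P.eval (x j.succ) := by
        simpa [hcase] using halt j
      have hxx : x j.castSucc * x j.succ < 0 := mul_neg_of_neg_of_pos hcase.1 hcase.2
      rw [hPeq] at hPc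
      have hRR : 0 < R.eval (x j.castSucc) * R.eval (x j.succ) := by
        nlinarith [mul_pos hPc hPs, sq_nonneg (P.eval (x j.succ))]
      rw [hRc, hRs] at hRR
      nlinarith [hRR, hxx]
    · have hPeq : P.eval (x j.castSucc) = -P.eval (x j.succ) := by
        simpa [hcase] using halt j
      have hPs0 : P.eval (x j.succ) ≠ 0 := by
        intro h; rw [h] at hPs; simp at hPs
      have hsq : 0 < P.eval (x j.succ) ^ 2 := by positivity
      have hxx : 0 < x j.castSucc * x j.succ := by
        rcases lt_or_gt_of_ne hxc with hneg | hpos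
        · rcases lt_or_gt_of_ne hxs with hneg' | hpos'
          · exact mul_pos_of_neg_of_neg hneg hneg'
          · exact absurd ⟨hneg, hpos'⟩ hcase
        · exact mul_pos hpos (lt_trans hpos hxlt)
      rw [hPeq] at hPc
      have hRR : R.eval (x j.castSucc) * R.eval (x j.succ) < 0 := by
        nlinarith [mul_pos hPc hPs, hsq]
      rw [hRc, hRs] at hRR
      nlinarith [hRR, hxx]
  -- roots of R₁ in each gap
  have hroots : ∀ j : Fin n, ∃ c ∈ Set.Ioo (x j.castSucc) (x j.succ), R₁.eval c = 0 := fun j =>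
    exists_root_of_mul_neg R₁ (hmono (Fin.castSucc_lt_succ : j.castSucc < j.succ)) (hsign j)
  choose y hy hy0 using hroots
  have hyinj : Function.Injective y := by
    have hys : StrictMono y := by
      intro i j hij
      calc y i < x i.succ := (hy i).2
        _ ≤ x j.castSucc := hmono.monotone (by
            rw [Fin.le_def]
            simp only [Fin.val_succ, Fin.coe_castSucc]
            omega)
        _ < y j := (hy j).1
    exact hys.injective
  -- R₁ is nonzero
  have hR₁ne : R₁ ≠ 0 := by
    intro h
    have h2 : R.eval (x 0) = 0 := by rw [hReval]; simp [h]
    have h3 := hPR 0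
    rw [h2] at h3
    simp at h3
  have hRne : R ≠ 0 := by
    intro h
    rw [h] at hR₁
    have : R₁ = 0 := by
      have hXne : (X : ℝ[X]) ≠ 0 := X_ne_zero
      exact (mul_eq_zero.mp hR₁.symm).resolve_left hXne
    exact hR₁ne this
  -- degree bound
  have hdegR : R.natDegree ≤ n := by
    apply Polynomial.natDegree_le_iff_degree_le.mpr
    exact le_trans (Polynomial.degree_sub_le P Q) (max_le hdeg hQdeg)
  have hdegmul : R.natDegree = 1 + R₁.natDegree := by
    rw [hR₁, Polynomial.natDegree_mul X_ne_zero hR₁ne, Polynomial.natDegree_X]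
  have hdegR₁ : R₁.natDegree < n := by omega
  have : R₁ = 0 := by
    apply Polynomial.eq_zero_of_natDegree_lt_card_of_eval_eq_zero R₁ hyinj hy0
    simpa using hdegR₁
  exact hR₁ne this
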